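/- arXiv:math/0610330 — 3 statements merged into one kernel-verified Lean document; each statement's English description precedes it below -/
import Mathlib

section
/- Let E ⊂ ℂ^N be compact, w ≥ 0 on E, μ a finite positive Borel measure on E, and ν the associated measure on Z ⊂ ℂ^(N+1). Suppose (E, w, μ) satisfies the weighted Bernstein–Markov inequality: for every ε > 0 there is C > 0 such that ‖w^d p‖_E ≤ C(1+ε)^d ‖w^d p‖_{L²(μ)} for all polynomials p of degree ≤ d. Then (Z̄, ν) satisfies the Bernstein–Markov inequality: for every ε > 0 there is C' > 0 such that ‖P‖_{Z̄} ≤ C'(1+ε)^{deg P} ‖P‖_{L²(ν)} for all polynomials P on ℂ^(N+1). -/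
open MeasureTheory Complex Finset

theorem orth_exp (k k' : ℕ) (hk : k ≠ k') :
    (∫ θ in (0:ℝ)..(2*Real.pi), Complex.exp (((k:ℂ) - k') * Complex.I * θ)) = 0 := by
  have hc : ((k:ℂ) - k') * Complex.I ≠ 0 := by
    simp [sub_eq_zero, Complex.I_ne_zero, Nat.cast_injective.ne hk]
  rw [integral_exp_mul_complex hc]
  have h1 : Complex.exp (((k:ℂ) - k') * Complex.I * ((2*Real.pi : ℝ):ℂ)) = 1 := by
    have := Complex.exp_int_mul_two_pi_mul_I ((k:ℤ) - k')
    rw [← this]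
    push_cast
    ring_nf
  rw [h1]
  simp

theorem parseval_trig (n : ℕ) (c : ℕ → ℂ) :
    (∫ θ in (0:ℝ)..(2*Real.pi),
      ‖∑ k ∈ Finset.range n, c k * Complex.exp (k * θ * Complex.I)‖ ^ 2)
    = 2 * Real.pi * ∑ k ∈ Finset.range n, ‖c k‖ ^ 2 := by
  have key : ∀ θ : ℝ, (‖∑ k ∈ Finset.range n, c k * Complex.exp (k * θ * Complex.I)‖ ^ 2 : ℝ)
      = (∑ k ∈ Finset.range n, ∑ k' ∈ Finset.range n,
          (c k * (starRingEnd ℂ) (c k')) * Complex.exp (((k:ℂ) - k') * Complex.I * θ)).re := by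
    intro θ
    have habs : ((‖∑ k ∈ Finset.range n, c k * Complex.exp (k * θ * Complex.I)‖ ^ 2 : ℝ))
        = ((∑ k ∈ Finset.range n, c k * Complex.exp (k * θ * Complex.I)) *
            (starRingEnd ℂ) (∑ k ∈ Finset.range n, c k * Complex.exp (k * θ * Complex.I))).re := by
      rw [Complex.mul_conj]
      simp [Complex.sq_norm]
    rw [habs]
    congr 1
    rw [map_sum, Finset.sum_mul_sum]
    apply Finset.sum_congr rfl; intro k _
    apply Finset.sum_congr rfl; intro k' _
    rw [map_mul, ← Complex.exp_conj]
    have h2 : (starRingEnd ℂ) ((k':ℂ) * θ * Complex.I) = -((k':ℂ) * θ * Complex.I) := by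
      simp only [map_mul, Complex.conj_I, Complex.conj_natCast, Complex.conj_ofReal]
      ring
    rw [h2, show ((k:ℂ) - k') * Complex.I * θ = (k * θ * Complex.I) + -((k':ℂ) * θ * Complex.I) by ring,
      Complex.exp_add]
    ring
  simp only [key]
  have hcont : ∀ k k' : ℕ, Continuous fun θ : ℝ =>
      (c k * (starRingEnd ℂ) (c k')) * Complex.exp (((k:ℂ) - k') * Complex.I * θ) := by
    intro k k'
    exact continuous_const.mul (Complex.continuous_exp.comp (continuous_const.mul
      Complex.continuous_ofReal))
  have hG : Continuous fun θ : ℝ => (∑ k ∈ Finset.range n, ∑ k' ∈ Finset.range n,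
      (c k * (starRingEnd ℂ) (c k')) * Complex.exp (((k:ℂ) - k') * Complex.I * θ)) := by
    exact continuous_finset_sum _ fun k _ => continuous_finset_sum _ fun k' _ => hcont k k'
  have hre : (∫ θ in (0:ℝ)..(2*Real.pi), (∑ k ∈ Finset.range n, ∑ k' ∈ Finset.range n,
        (c k * (starRingEnd ℂ) (c k')) * Complex.exp (((k:ℂ) - k') * Complex.I * θ)).re)
      = (∫ θ in (0:ℝ)..(2*Real.pi), ∑ k ∈ Finset.range n, ∑ k' ∈ Finset.range n,
        (c k * (starRingEnd ℂ) (c k')) * Complex.exp (((k:ℂ) - k') * Complex.I * θ)).re := by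
    have h2pi : (0:ℝ) ≤ 2*Real.pi := by positivity
    rw [intervalIntegral.integral_of_le h2pi, intervalIntegral.integral_of_le h2pi]
    simpa [RCLike.re_eq_complex_re] using integral_re (f := fun θ : ℝ =>
      (∑ k ∈ Finset.range n, ∑ k' ∈ Finset.range n,
        (c k * (starRingEnd ℂ) (c k')) * Complex.exp (((k:ℂ) - k') * Complex.I * θ)))
      (μ := volume.restrict (Set.Ioc 0 (2*Real.pi))) hG.integrableOn_Ioc
  rw [hre, intervalIntegral.integral_finset_sum (fun k _ =>
    ((continuous_finset_sum _ fun k' _ => hcont k k').intervalIntegrable _ _))]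
  have hker : ∀ k ∈ Finset.range n,
      (∫ θ in (0:ℝ)..(2*Real.pi), ∑ k' ∈ Finset.range n,
        (c k * (starRingEnd ℂ) (c k')) * Complex.exp (((k:ℂ) - k') * Complex.I * θ))
      = (c k * (starRingEnd ℂ) (c k)) * (2*Real.pi) := by
    intro k hk
    rw [intervalIntegral.integral_finset_sum (fun k' _ => (hcont k k').intervalIntegrable _ _)]
    rw [Finset.sum_eq_single_of_mem k hk]
    · rw [intervalIntegral.integral_const_mul]
      have : ∀ θ : ℝ, Complex.exp (((k:ℂ) - k) * Complex.I * θ) = 1 := by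
        intro θ; simp
      simp only [this]
      rw [intervalIntegral.integral_const]
      simp only [sub_zero, Complex.real_smul, smul_eq_mul]
      push_cast
      ring
    · intro k' _ hne
      rw [intervalIntegral.integral_const_mul, orth_exp k k' (fun h => hne h.symm), mul_zero]
  rw [Finset.sum_congr rfl hker, Complex.re_sum]
  rw [Finset.mul_sum]
  apply Finset.sum_congr rfl
  intro k _
  rw [Complex.mul_conj]
  simp [Complex.sq_norm]
  ring
open MeasureTheory Finset

theorem eval_smul_homog {σ : Type*} {p : MvPolynomial σ ℂ} {n : ℕ}
    (hp : p.IsHomogeneous n) (c : ℂ) (x : σ → ℂ) :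
    MvPolynomial.eval (fun i => c * x i) p = c ^ n * MvPolynomial.eval x p := by
  rw [MvPolynomial.eval_eq, MvPolynomial.eval_eq, Finset.mul_sum]
  apply Finset.sum_congr rfl
  intro m hm
  have hdeg : (∑ i ∈ m.support, m i) = n := by
    simpa [Finsupp.weight_apply, Finsupp.sum, smul_eq_mul, mul_one] using hp (MvPolynomial.mem_support_iff.mp hm)
  have : (∏ i ∈ m.support, (c * x i) ^ m i)
      = c ^ n * ∏ i ∈ m.support, x i ^ m i := by
    rw [← hdeg]
    rw [Finset.prod_congr rfl (fun i _ => mul_pow c (x i) (m i)), Finset.prod_mul_distrib,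
      Finset.prod_pow_eq_pow_sum]
  rw [this]; ring

theorem totalDegree_dehom_le {N : ℕ} (q : MvPolynomial (Option (Fin N)) ℂ) :
    (MvPolynomial.aeval (fun o : Option (Fin N) =>
      Option.elim o 1 (fun j => MvPolynomial.X j)) q : MvPolynomial (Fin N) ℂ).totalDegree
      ≤ q.totalDegree := by
  conv_lhs => rw [q.as_sum, map_sum]
  apply le_trans (MvPolynomial.totalDegree_finset_sum _ _)
  apply Finset.sup_le
  intro m hm
  rw [MvPolynomial.aeval_monomial]
  apply le_trans (MvPolynomial.totalDegree_mul _ _)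
  have h1 : (algebraMap ℂ (MvPolynomial (Fin N) ℂ) (MvPolynomial.coeff m q)).totalDegree = 0 :=
    MvPolynomial.totalDegree_C _
  rw [h1, zero_add]
  refine le_trans ?_ (MvPolynomial.le_totalDegree hm)
  rw [Finsupp.prod]
  apply le_trans (MvPolynomial.totalDegree_finset_prod _ _)
  rw [Finsupp.sum]
  apply Finset.sum_le_sum
  intro o _
  apply le_trans (MvPolynomial.totalDegree_pow _ _)
  rcases o with _ | j
  · simp
  · simp [MvPolynomial.totalDegree_X]

theorem usc_bddAbove {α : Type*} [TopologicalSpace α] {E : Set α} {w : α → ℝ}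
    (hE : IsCompact E) (hw : UpperSemicontinuousOn w E) : BddAbove (w '' E) := by
  choose U hU using fun (x : E) =>
    mem_nhdsWithin.mp (hw x x.2 (w x + 1) (lt_add_one _))
  rcases hE.elim_nhds_subcover' (fun x hx => U ⟨x, hx⟩)
    (fun x hx => (hU ⟨x, hx⟩).1.mem_nhds (hU ⟨x, hx⟩).2.1) with ⟨t, ht⟩
  rcases t.eq_empty_or_nonempty with rfl | htne
  · simp at ht
    rw [ht]
    simp
  refine ⟨t.sup' htne (fun x => w x + 1), ?_⟩
  rintro y ⟨z, hz, rfl⟩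
  rcases Set.mem_iUnion₂.mp (ht hz) with ⟨x, hx, hzU⟩
  refine le_trans ?_ (Finset.le_sup' (fun x : E => w (x:_) + 1) hx)
  have := (hU x).2.2 ⟨hzU, hz⟩
  simp only [Set.mem_setOf_eq] at this
  exact this.le

theorem aeval_apply_eq_eval {σ : Type*} (f : σ → ℂ) (p : MvPolynomial σ ℂ) :
    MvPolynomial.aeval f p = MvPolynomial.eval f p := by
  rw [← MvPolynomial.coe_aeval_eq_eval]; rfl

theorem eval_dehom {N : ℕ} (q : MvPolynomial (Option (Fin N)) ℂ) (l : Fin N → ℂ) :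
    MvPolynomial.eval l (MvPolynomial.aeval (fun o : Option (Fin N) =>
      Option.elim o 1 (fun j => MvPolynomial.X j)) q)
      = MvPolynomial.eval (fun o : Option (Fin N) => (Option.elim o 1 l : ℂ)) q := by
  induction q using MvPolynomial.induction_on with
  | C a => simp
  | add p q hp hq => rw [map_add, map_add, map_add, hp, hq]
  | mul_X p i hp =>
    rw [map_mul, map_mul, hp]
    cases i <;> simp

noncomputable def nuMeasure {N : ℕ} (μ : Measure (Fin N → ℂ)) (w : (Fin N → ℂ) → ℝ) :
    Measure (ℂ × (Fin N → ℂ)) :=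
  μ.bind (fun l => Measure.map
    (fun θ : ℝ => ((w l * Complex.exp (θ * Complex.I),
        fun i => l i * (w l * Complex.exp (θ * Complex.I))) : ℂ × (Fin N → ℂ)))
    ((ENNReal.ofReal (2 * Real.pi))⁻¹ • (volume.restrict (Set.Ioc 0 (2 * Real.pi)))))
section Main

open MeasureTheory Finset

/-- If `(E, w, μ)` satisfies the weighted Bernstein–Markov inequality, then `(Z̄, ν)`
satisfies the Bernstein–Markov inequality, where `Z = {(t,λt) : λ ∈ E, |t| = w(λ)}`
and `ν = dm_λ ⊗ dμ`. -/
theorem weighted_BM_implies_BM {N : ℕ} (E : Set (Fin N → ℂ)) (hE : IsCompact E)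
    (w : (Fin N → ℂ) → ℝ) (hw_usc : UpperSemicontinuousOn w E)
    (hwm : Measurable w) (hw0 : ∀ l ∈ E, 0 ≤ w l)
    (μ : Measure (Fin N → ℂ)) [IsFiniteMeasure μ] (hμE : μ Eᶜ = 0)
    (Z : Set (ℂ × (Fin N → ℂ)))
    (hZ : Z = {p | ∃ l ∈ E, ∃ t : ℂ,
      p = (t, fun i => l i * t) ∧ ‖t‖ = w l})
    (hBM : ∀ ε > (0:ℝ), ∃ C > (0:ℝ), ∀ d : ℕ, ∀ p : MvPolynomial (Fin N) ℂ,
      p.totalDegree ≤ d →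
      sSup ((fun l => w l ^ d * ‖MvPolynomial.eval l p‖) '' E)
        ≤ C * (1 + ε) ^ d *
          Real.sqrt (∫ l, (w l ^ d * ‖MvPolynomial.eval l p‖) ^ 2 ∂μ)) :
    ∀ ε > (0:ℝ), ∃ C > (0:ℝ), ∀ P : MvPolynomial (Option (Fin N)) ℂ,
      sSup ((fun x : ℂ × (Fin N → ℂ) =>
          ‖MvPolynomial.eval (fun i => Option.elim i x.1 x.2) P‖) '' closure Z)
        ≤ C * (1 + ε) ^ P.totalDegree *
          Real.sqrt (∫ x : ℂ × (Fin N → ℂ),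
            ‖MvPolynomial.eval (fun i => Option.elim i x.1 x.2) P‖ ^ 2
            ∂(nuMeasure μ w)) := by
  intro ε hε
  obtain ⟨C, hC, hC'⟩ := hBM (ε/2) (by positivity)
  refine ⟨C * ((2+ε)/ε), by positivity, ?_⟩
  intro P
  set d := P.totalDegree with hd
  -- notation
  set m : Measure ℝ := (ENNReal.ofReal (2 * Real.pi))⁻¹ • (volume.restrict (Set.Ioc 0 (2 * Real.pi))) with hm
  set g : (Fin N → ℂ) → ℝ → ℂ × (Fin N → ℂ) := fun l θ =>
    ((w l * Complex.exp (θ * Complex.I),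
      fun i => l i * (w l * Complex.exp (θ * Complex.I))) : ℂ × (Fin N → ℂ)) with hg
  have hnu : nuMeasure μ w = μ.bind (fun l => Measure.map (g l) m) := rfl
  set A : ℂ × (Fin N → ℂ) → ℝ := fun x =>
    ‖MvPolynomial.eval (fun i => Option.elim i x.1 x.2) P‖ with hA
  have hAcont : Continuous A := by
    have hpt : Continuous fun x : ℂ × (Fin N → ℂ) => (fun i => Option.elim i x.1 x.2) := by
      apply continuous_pi
      intro i
      cases i with
      | none => exact continuous_fst
      | some j => exact (continuous_apply j).comp continuous_snd
    exact continuous_norm.comp ((MvPolynomial.continuous_eval (p := P)).comp hpt)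
  set G : ℕ → MvPolynomial (Fin N) ℂ := fun k =>
    MvPolynomial.aeval (fun o : Option (Fin N) => Option.elim o 1 (fun j => MvPolynomial.X j))
      (MvPolynomial.homogeneousComponent k P) with hG
  have hGdeg : ∀ k : ℕ, (G k).totalDegree ≤ k := by
    intro k
    exact le_trans (totalDegree_dehom_le _)
      (MvPolynomial.homogeneousComponent_isHomogeneous k P).totalDegree_le
  -- key evaluation identity
  have hkey : ∀ (t : ℂ) (l : Fin N → ℂ),
      MvPolynomial.eval (fun i => Option.elim i t (fun j => l j * t)) P
        = ∑ k ∈ Finset.range (d+1), t ^ k * MvPolynomial.eval l (G k) := by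
    intro t l
    have hpt : (fun i : Option (Fin N) => Option.elim i t (fun j => l j * t))
        = (fun i : Option (Fin N) => t * (Option.elim i 1 l : ℂ)) := by
      funext i
      cases i <;> simp [mul_comm]
    conv_lhs => rw [← MvPolynomial.sum_homogeneousComponent P]
    rw [map_sum]
    apply Finset.sum_congr rfl
    intro k _
    rw [hpt, eval_smul_homog (MvPolynomial.homogeneousComponent_isHomogeneous k P) t _]
    congr 1
    rw [hG]
    exact (eval_dehom (MvPolynomial.homogeneousComponent k P) l).symm
  -- bdd above on E
  have hSk_bdd : ∀ k : ℕ,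
      BddAbove ((fun l => w l ^ k * ‖MvPolynomial.eval l (G k)‖) '' E) := by
    obtain ⟨W, hW⟩ := usc_bddAbove hE hw_usc
    intro k
    obtain ⟨M, hM⟩ := hE.bddAbove_image ((continuous_norm.comp
      (MvPolynomial.continuous_eval (p := G k))).continuousOn)
    refine ⟨(max W 0)^k * max M 0, ?_⟩
    rintro y ⟨l, hl, rfl⟩
    have h1 : 0 ≤ w l := hw0 l hl
    have h2 : w l ≤ max W 0 := le_trans (hW ⟨l, hl, rfl⟩) (le_max_left _ _)
    have h3 : ‖MvPolynomial.eval l (G k)‖ ≤ max M 0 :=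
      le_trans (hM ⟨l, hl, rfl⟩) (le_max_left _ _)
    exact mul_le_mul (pow_le_pow_left₀ h1 h2 k) h3 (norm_nonneg _) (by positivity)
  -- compactness of closure Z
  have hZc : IsCompact (closure Z) := by
    obtain ⟨W, hW⟩ := usc_bddAbove hE hw_usc
    obtain ⟨R, hR⟩ := hE.isBounded.subset_closedBall 0
    have hsub : Z ⊆ (Metric.closedBall 0 (max W 0)) ×ˢ
        (Metric.closedBall (0 : Fin N → ℂ) (max R 0 * max W 0)) := by
      rw [hZ]
      rintro p ⟨l, hl, t, rfl, ht⟩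
      have hWl : w l ≤ max W 0 := le_trans (hW ⟨l, hl, rfl⟩) (le_max_left _ _)
      have htW : ‖t‖ ≤ max W 0 := by rw [ht]; exact hWl
      have hlR : ‖l‖ ≤ max R 0 := by
        have := hR hl
        simp only [Metric.mem_closedBall, dist_zero_right] at this
        exact le_trans this (le_max_left _ _)
      refine Set.mem_prod.mpr ⟨?_, ?_⟩
      · simp only [Metric.mem_closedBall, dist_zero_right]
        exact htW
      · simp only [Metric.mem_closedBall, dist_zero_right]
        rw [pi_norm_le_iff_of_nonneg (by positivity)]
        intro i
        rw [norm_mul]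
        refine mul_le_mul ?_ htW (norm_nonneg _) (by positivity)
        exact le_trans (norm_le_pi_norm l i) hlR
    have hZb : Bornology.IsBounded Z :=
      Bornology.IsBounded.subset ((Metric.isBounded_closedBall).prod
        (Metric.isBounded_closedBall)) hsub
    exact Metric.isCompact_of_isClosed_isBounded isClosed_closure hZb.closure
  have hSb : BddAbove (A '' closure Z) := (hZc.image hAcont).bddAbove
  have h2pi : (0:ℝ) < 2 * Real.pi := by positivity
  haveI hm_prob : IsProbabilityMeasure m := by
    constructor
    rw [hm, Measure.smul_apply, Measure.restrict_apply_univ, Real.volume_Ioc, smul_eq_mul,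
      sub_zero]
    exact ENNReal.inv_mul_cancel (by simp [ENNReal.ofReal_eq_zero]; linarith)
      ENNReal.ofReal_ne_top
  have hgc : ∀ l, Continuous (g l) := by
    intro l
    have h1 : Continuous fun θ : ℝ => ((w l : ℂ)) * Complex.exp (θ * Complex.I) :=
      continuous_const.mul (Complex.continuous_exp.comp
        (Complex.continuous_ofReal.mul continuous_const))
    exact h1.prodMk (continuous_pi fun i => continuous_const.mul h1)
  have hgm : ∀ l, Measurable (g l) := fun l => (hgc l).measurable
  have hkm : Measurable (fun q : (Fin N → ℂ) × ℝ => g q.1 q.2) := by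
    have h1 : Measurable fun q : (Fin N → ℂ) × ℝ =>
        ((w q.1 : ℂ)) * Complex.exp (q.2 * Complex.I) := by
      apply Measurable.mul
      · exact Complex.measurable_ofReal.comp (hwm.comp measurable_fst)
      · exact Complex.continuous_exp.measurable.comp
          ((Complex.measurable_ofReal.comp measurable_snd).mul measurable_const)
    exact h1.prodMk (measurable_pi_lambda _ fun i =>
      ((measurable_pi_apply i).comp measurable_fst).mul h1)
  have hfmeas : Measurable (fun l => Measure.map (g l) m) := by
    apply Measure.measurable_of_measurable_coe
    intro s hs
    simp_rw [Measure.map_apply (hgm _) hs]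
    have hind : ∀ l, m (g l ⁻¹' s) = ∫⁻ θ, s.indicator (fun _ => (1:ENNReal)) (g l θ) ∂m := by
      intro l
      rw [← lintegral_indicator_one ((hgm l) hs)]
      apply lintegral_congr
      intro θ
      by_cases hθ : g l θ ∈ s <;>
        simp [Set.indicator_apply, Set.mem_preimage, hθ]
    simp_rw [hind]
    exact Measurable.lintegral_prod_right'
      (f := fun q : (Fin N → ℂ) × ℝ => s.indicator (fun _ => (1:ENNReal)) (g q.1 q.2))
      ((measurable_const.indicator hs).comp hkm)
  have hAm2 : Measurable fun x : ℂ × (Fin N → ℂ) => ENNReal.ofReal (A x ^ 2) :=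
    ((hAcont.pow 2).measurable).ennreal_ofReal
  -- the coefficient computation
  have hAg : ∀ (l : Fin N → ℂ) (θ : ℝ), A (g l θ) = 
      ‖∑ k ∈ Finset.range (d+1),
        (((w l : ℂ))^k * MvPolynomial.eval l (G k)) * Complex.exp (k * θ * Complex.I)‖ := by
    intro l θ
    rw [hA, hg]
    show ‖MvPolynomial.eval (fun i => Option.elim i
      ((w l : ℂ) * Complex.exp (θ * Complex.I))
      (fun j => l j * ((w l : ℂ) * Complex.exp (θ * Complex.I)))) P‖ = _
    rw [hkey]
    congr 1
    apply Finset.sum_congr rfl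
    intro k _
    rw [mul_pow, ← Complex.exp_nat_mul]
    rw [show ((k:ℂ)) * (θ * Complex.I) = (k:ℂ) * θ * Complex.I by ring]
    ring
  have hcsum : ∀ l : Fin N → ℂ,
      (∑ k ∈ Finset.range (d+1),
        ‖((w l : ℂ))^k * MvPolynomial.eval l (G k)‖ ^ 2)
      = ∑ k ∈ Finset.range (d+1),
          w l ^ (2*k) * ‖MvPolynomial.eval l (G k)‖ ^ 2 := by
    intro l
    apply Finset.sum_congr rfl
    intro k _
    rw [norm_mul, norm_pow, Complex.norm_real, Real.norm_eq_abs, mul_pow, ← pow_mul, mul_comm k 2, pow_mul,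
      _root_.sq_abs, ← pow_mul]
  have hParse : ∀ l : Fin N → ℂ,
      (∫ θ in (0:ℝ)..(2*Real.pi), A (g l θ) ^ 2)
      = 2 * Real.pi * ∑ k ∈ Finset.range (d+1),
          w l ^ (2*k) * ‖MvPolynomial.eval l (G k)‖ ^ 2 := by
    intro l
    simp_rw [hAg l]
    rw [parseval_trig (d+1) (fun k => ((w l : ℂ))^k * MvPolynomial.eval l (G k)), hcsum l]
  have hAg2cont : ∀ l, Continuous fun θ : ℝ => A (g l θ) ^ 2 := by
    intro l
    exact (hAcont.comp (hgc l)).pow 2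
  have hinner : ∀ l : Fin N → ℂ,
      (∫⁻ θ, ENNReal.ofReal (A (g l θ) ^ 2) ∂m)
      = ENNReal.ofReal (∑ k ∈ Finset.range (d+1),
          w l ^ (2*k) * ‖MvPolynomial.eval l (G k)‖ ^ 2) := by
    intro l
    rw [hm, lintegral_smul_measure]
    rw [← ofReal_integral_eq_lintegral_ofReal ((hAg2cont l).integrableOn_Ioc)
      (ae_of_all _ fun θ => sq_nonneg _)]
    rw [← intervalIntegral.integral_of_le h2pi.le, hParse l]
    rw [smul_eq_mul, ENNReal.ofReal_mul h2pi.le, ← mul_assoc,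
      ENNReal.inv_mul_cancel (by simp [ENNReal.ofReal_eq_zero]; linarith) ENNReal.ofReal_ne_top,
      one_mul]
  -- F1 : integral formula
  have hF1 : (∫⁻ x, ENNReal.ofReal (A x ^ 2) ∂(nuMeasure μ w))
      = ∫⁻ l, ENNReal.ofReal (∑ k ∈ Finset.range (d+1),
          (w l) ^ (2*k) * ‖MvPolynomial.eval l (G k)‖ ^ 2) ∂μ := by
    rw [hnu, Measure.lintegral_bind hfmeas.aemeasurable hAm2.aemeasurable]
    apply lintegral_congr
    intro l
    rw [lintegral_map hAm2 (hgm l)]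
    exact hinner l
  -- F2 : finiteness
  have hF2 : (∫⁻ x, ENNReal.ofReal (A x ^ 2) ∂(nuMeasure μ w)) ≠ ⊤ := by
    rw [hF1]
    set S' := sSup (A '' closure Z) with hS'
    have hbound : ∀ l ∈ E, (∑ k ∈ Finset.range (d+1),
        w l ^ (2*k) * ‖MvPolynomial.eval l (G k)‖ ^ 2) ≤ S'^2 := by
      intro l hl
      have hZmem : ∀ θ : ℝ, g l θ ∈ Z := by
        intro θ
        rw [hZ, hg]
        refine ⟨l, hl, (w l : ℂ) * Complex.exp (θ * Complex.I), rfl, ?_⟩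
        rw [norm_mul, Complex.norm_real, Complex.norm_exp]
        simp [Real.norm_eq_abs, _root_.abs_of_nonneg (hw0 l hl)]
      have hptw : ∀ θ : ℝ, A (g l θ) ^ 2 ≤ S' ^ 2 := by
        intro θ
        have h0 : 0 ≤ A (g l θ) := by rw [hA]; exact norm_nonneg _
        have h1 : A (g l θ) ≤ S' := le_csSup hSb ⟨g l θ, subset_closure (hZmem θ), rfl⟩
        exact pow_le_pow_left₀ h0 h1 2
      have hint : 2 * Real.pi * (∑ k ∈ Finset.range (d+1),
          w l ^ (2*k) * ‖MvPolynomial.eval l (G k)‖ ^ 2) ≤ S'^2 * (2*Real.pi) := by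
        rw [← hParse l]
        calc (∫ θ in (0:ℝ)..(2*Real.pi), A (g l θ) ^ 2)
            ≤ ∫ _θ in (0:ℝ)..(2*Real.pi), S'^2 :=
              intervalIntegral.integral_mono_on h2pi.le
                ((hAg2cont l).intervalIntegrable _ _) intervalIntegrable_const
                (fun θ _ => hptw θ)
          _ = S'^2 * (2*Real.pi) := by
              rw [intervalIntegral.integral_const, sub_zero, smul_eq_mul]
              ring
      nlinarith [Real.pi_pos]
    have hE' : ∀ᵐ l ∂μ, l ∈ E := ae_iff.mpr hμE
    have hle : (∫⁻ l, ENNReal.ofReal (∑ k ∈ Finset.range (d+1),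
        (w l) ^ (2*k) * ‖MvPolynomial.eval l (G k)‖ ^ 2) ∂μ)
        ≤ ENNReal.ofReal (S'^2) * μ Set.univ := by
      rw [← lintegral_const]
      apply lintegral_mono_ae
      filter_upwards [hE'] with l hl
      exact ENNReal.ofReal_le_ofReal (hbound l hl)
    exact ne_top_of_le_ne_top (ENNReal.mul_ne_top ENNReal.ofReal_ne_top (measure_ne_top μ _)) hle
  -- F4 : per-component L² bound
  have hF4 : ∀ k ∈ Finset.range (d+1),
      (∫ l, (w l ^ k * ‖MvPolynomial.eval l (G k)‖) ^ 2 ∂μ)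
        ≤ ∫ x, A x ^ 2 ∂(nuMeasure μ w) := by
    intro k hk
    have hwk : Measurable fun l => (w l ^ k * ‖MvPolynomial.eval l (G k)‖) ^ 2 :=
      ((hwm.pow_const k).mul (continuous_norm.comp
        (MvPolynomial.continuous_eval (p := G k))).measurable).pow_const 2
    rw [integral_eq_lintegral_of_nonneg_ae (ae_of_all _ fun l => sq_nonneg _)
      hwk.aestronglyMeasurable]
    rw [integral_eq_lintegral_of_nonneg_ae (ae_of_all _ fun x => sq_nonneg (A x))
      ((hAcont.pow 2).aestronglyMeasurable)]
    apply ENNReal.toReal_mono hF2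
    rw [hF1]
    apply lintegral_mono
    intro l
    apply ENNReal.ofReal_le_ofReal
    have h1 : (w l ^ k * ‖MvPolynomial.eval l (G k)‖)^2
        = w l ^ (2*k) * ‖MvPolynomial.eval l (G k)‖^2 := by
      rw [mul_pow, ← pow_mul, mul_comm k 2]
    rw [h1]
    apply Finset.single_le_sum
      (f := fun j => w l ^ (2*j) * ‖MvPolynomial.eval l (G j)‖^2) ?_ hk
    intro j _
    have h2 : w l ^ (2*j) = (w l ^ j)^2 := by rw [mul_comm 2 j, pow_mul]
    rw [h2]
    positivity
  -- pointwise bound on Z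
  set I : ℝ := ∫ x, A x ^ 2 ∂(nuMeasure μ w) with hI
  have hInn : 0 ≤ I := by
    apply integral_nonneg; intro x; positivity
  have hBnd : ∀ z ∈ Z, A z ≤ (d+1) * (C * (1+ε/2)^d * Real.sqrt I) := by
    intro z hz
    rw [hZ] at hz
    obtain ⟨l, hl, t, rfl, ht⟩ := hz
    have h1 : A (t, fun i => l i * t) = 
        ‖∑ k ∈ Finset.range (d+1), t ^ k * MvPolynomial.eval l (G k)‖ := by
      rw [hA]
      show ‖MvPolynomial.eval (fun i => Option.elim i t (fun j => l j * t)) P‖ = _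
      rw [hkey t l]
    rw [h1]
    calc ‖∑ k ∈ Finset.range (d+1), t ^ k * MvPolynomial.eval l (G k)‖
        ≤ ∑ k ∈ Finset.range (d+1), ‖t ^ k * MvPolynomial.eval l (G k)‖ :=
          norm_sum_le _ _
      _ = ∑ k ∈ Finset.range (d+1), w l ^ k * ‖MvPolynomial.eval l (G k)‖ := by
          apply Finset.sum_congr rfl
          intro k _
          rw [norm_mul, norm_pow, ht]
      _ ≤ ∑ k ∈ Finset.range (d+1), C * (1+ε/2)^d * Real.sqrt I := by
          apply Finset.sum_le_sum
          intro k hk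
          have hk' : k ≤ d := Nat.lt_succ_iff.mp (Finset.mem_range.mp hk)
          calc w l ^ k * ‖MvPolynomial.eval l (G k)‖
              ≤ sSup ((fun l => w l ^ k * ‖MvPolynomial.eval l (G k)‖) '' E) :=
                le_csSup (hSk_bdd k) ⟨l, hl, rfl⟩
            _ ≤ C * (1+ε/2)^k * Real.sqrt
                  (∫ l, (w l ^ k * ‖MvPolynomial.eval l (G k)‖) ^ 2 ∂μ) :=
                hC' k (G k) (hGdeg k)
            _ ≤ C * (1+ε/2)^d * Real.sqrt I := by
                apply mul_le_mul
                · apply mul_le_mul_of_nonneg_left _ hC.le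
                  exact pow_le_pow_right₀ (by linarith) hk'
                · exact Real.sqrt_le_sqrt (hF4 k hk)
                · exact Real.sqrt_nonneg _
                · positivity
      _ = (d+1) * (C * (1+ε/2)^d * Real.sqrt I) := by
          rw [Finset.sum_const, Finset.card_range, nsmul_eq_mul]
          push_cast
          ring
  -- conclude
  have hkey2 : ((d:ℝ)+1) * ((1+ε/2)^d) ≤ (2+ε)/ε * (1+ε)^d := by
    set δ : ℝ := ε/(2+ε) with hδ
    have hδ0 : 0 < δ := by positivity
    have hδ1 : δ ≤ 1 := by
      rw [hδ, div_le_one (by linarith)]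
      linarith
    have hfac : (1+ε) = (1+ε/2)*(1+δ) := by
      rw [hδ]
      field_simp
      ring
    have hber : 1 + (d:ℝ)*δ ≤ (1+δ)^d := one_add_mul_le_pow (by linarith) d
    have h2 : δ * ((d:ℝ)+1) ≤ (1+δ)^d := by
      nlinarith [Nat.cast_nonneg (α := ℝ) d]
    have h3 : ((1+ε/2):ℝ)^d * (δ * ((d:ℝ)+1)) ≤ (1+ε/2)^d * (1+δ)^d :=
      mul_le_mul_of_nonneg_left h2 (by positivity)
    rw [hfac, mul_pow]
    have hδε : (2+ε)/ε = δ⁻¹ := by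
      rw [hδ]
      field_simp
    rw [hδε, ← sub_nonneg]
    have hrw : δ⁻¹ * ((1+ε/2)^d * (1+δ)^d) - ((d:ℝ)+1) * (1+ε/2)^d
        = δ⁻¹ * ((1+ε/2)^d * (1+δ)^d - (1+ε/2)^d * (δ * ((d:ℝ)+1))) := by
      field_simp
    rw [hrw]
    have := sub_nonneg.mpr h3
    positivity
  have hfin : sSup (A '' closure Z) ≤ C * ((2+ε)/ε) * (1+ε)^d * Real.sqrt I := by
    apply Real.sSup_le
    · rintro y ⟨x, hx, rfl⟩
      have hcl : closure Z ⊆ {x | A x ≤ (d+1) * (C * (1+ε/2)^d * Real.sqrt I)} :=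
        closure_minimal hBnd (isClosed_le hAcont continuous_const)
      refine le_trans (hcl hx) ?_
      calc ((d:ℝ)+1) * (C * (1+ε/2)^d * Real.sqrt I)
          = C * Real.sqrt I * (((d:ℝ)+1) * (1+ε/2)^d) := by ring
        _ ≤ C * Real.sqrt I * ((2+ε)/ε * (1+ε)^d) := by
            apply mul_le_mul_of_nonneg_left hkey2
            positivity
        _ = C * ((2+ε)/ε) * (1+ε)^d * Real.sqrt I := by ring
    · positivity
  exact hfin

end Main
end

section
/- Let E ⊂ ℝ^N be compact, w : E → ℝ continuous with inf_{x ∈ E} w(x) > 0, and let σ be a finite positive Borel measure on E such that (E, σ) satisfies the Bernstein–Markov inequality. Then (E, w, σ) satisfies the weighted Bernstein–Markov inequality: for every ε > 0 there exists C > 0 such that for all d ≥ 0 and all polynomials G of degree ≤ d, ‖w^d G‖_E ≤ C(1+ε)^d ‖w^d G‖_{L²(σ)}. -/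
open MeasureTheory

lemma aeval_coord_apply {N : ℕ} {E : Set (Fin N → ℝ)}
    (p : MvPolynomial (Fin N) ℝ) (x : E) :
    (MvPolynomial.aeval
      (fun i => (⟨fun y : E => (y : Fin N → ℝ) i, (continuous_apply i).comp continuous_subtype_val⟩ : C(E, ℝ))) p) x
      = MvPolynomial.eval (x : Fin N → ℝ) p := by
  induction p using MvPolynomial.induction_on with
  | C a => simp [MvPolynomial.aeval_C]
  | add p q hp hq => simp [hp, hq]
  | mul_X p i hp => simp [hp]

-- a polynomial close to w on E
lemma exists_poly_near {N : ℕ} (E : Set (Fin N → ℝ)) (hE : IsCompact E)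
    (w : (Fin N → ℝ) → ℝ) (hw : ContinuousOn w E) (δ : ℝ) (hδ : 0 < δ) :
    ∃ H : MvPolynomial (Fin N) ℝ, ∀ x ∈ E, |MvPolynomial.eval x H - w x| < δ := by
  haveI : CompactSpace E := isCompact_iff_compactSpace.mp hE
  set φ : MvPolynomial (Fin N) ℝ →ₐ[ℝ] C(E, ℝ) :=
    MvPolynomial.aeval (fun i => (⟨fun y : E => (y : Fin N → ℝ) i, (continuous_apply i).comp continuous_subtype_val⟩ : C(E, ℝ)))
  have hsep : (φ.range).SeparatesPoints := by
    intro x y hxy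
    have : (x : Fin N → ℝ) ≠ (y : Fin N → ℝ) := Subtype.coe_injective.ne hxy
    obtain ⟨i, hi⟩ := Function.ne_iff.mp this
    refine ⟨_, ⟨φ (MvPolynomial.X i), ⟨MvPolynomial.X i, rfl⟩, rfl⟩, ?_⟩
    simpa [φ, aeval_coord_apply] using hi
  obtain ⟨⟨g, hgA⟩, hg⟩ :=
    ContinuousMap.exists_mem_subalgebra_near_continuous_of_separatesPoints φ.range hsep
      (fun x : E => w x) (hw.restrict) δ hδ
  obtain ⟨H, hH⟩ := Set.mem_range.mp (AlgHom.mem_range φ|>.mp hgA)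
  refine ⟨H, fun x hx => ?_⟩
  have h2 := hg ⟨x, hx⟩
  have h3 : g ⟨x, hx⟩ = MvPolynomial.eval x H := by
    rw [← hH]; exact aeval_coord_apply H ⟨x, hx⟩
  simp only [Real.norm_eq_abs] at h2
  rwa [h3] at h2



/-- If `E ⊂ ℝ^N` is compact, `w` is continuous on `E` with `inf_E w > 0`, and
`(E, σ)` satisfies the Bernstein–Markov inequality, then `(E, w, σ)` satisfies the
weighted Bernstein–Markov inequality. -/
theorem weighted_BM_from_BM_real {N : ℕ} (E : Set (Fin N → ℝ)) (hE : IsCompact E)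
    (w : (Fin N → ℝ) → ℝ) (hw : ContinuousOn w E) (hwpos : 0 < sInf (w '' E))
    (σ : Measure (Fin N → ℝ)) [IsFiniteMeasure σ] (hσE : σ Eᶜ = 0)
    (hBM : ∀ ε > (0:ℝ), ∃ C > (0:ℝ), ∀ p : MvPolynomial (Fin N) ℝ,
      sSup ((fun x => |MvPolynomial.eval x p|) '' E)
        ≤ C * (1 + ε) ^ p.totalDegree *
          Real.sqrt (∫ x, (MvPolynomial.eval x p) ^ 2 ∂σ)) :
    ∀ ε > (0:ℝ), ∃ C > (0:ℝ), ∀ d : ℕ, ∀ G : MvPolynomial (Fin N) ℝ,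
      G.totalDegree ≤ d →
      sSup ((fun x => w x ^ d * |MvPolynomial.eval x G|) '' E)
        ≤ C * (1 + ε) ^ d *
          Real.sqrt (∫ x, (w x ^ d * |MvPolynomial.eval x G|) ^ 2 ∂σ) := by
  have hEm : MeasurableSet E := hE.isClosed.measurableSet
  have hrestr : σ.restrict E = σ :=
    Measure.restrict_eq_self_of_ae_mem (by rw [ae_iff]; exact hσE)
  set m := sInf (w '' E) with hm
  have hwE : IsCompact (w '' E) := hE.image_of_continuousOn hw
  have hmle : ∀ x ∈ E, m ≤ w x := fun x hx => csInf_le hwE.bddBelow ⟨x, hx, rfl⟩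
  have hwposE : ∀ x ∈ E, 0 < w x := fun x hx => lt_of_lt_of_le hwpos (hmle x hx)
  intro ε hε
  set η := Real.sqrt (1 + ε) with hηdef
  have hη2 : η * η = 1 + ε := Real.mul_self_sqrt (by linarith)
  have hη1 : 1 < η := by nlinarith [Real.sqrt_nonneg (1 + ε)]
  set δ := (η - 1) / (η + 1) with hδdef
  have hδ0 : 0 < δ := div_pos (by linarith) (by linarith)
  have hδ1 : δ < 1 := by rw [div_lt_one (by linarith)]; linarith
  have hkey : 1 + δ = η * (1 - δ) := by
    rw [hδdef]; field_simp; ring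
  -- polynomial approximant of w
  obtain ⟨H, hHappr⟩ := exists_poly_near E hE w hw (δ * m) (mul_pos hδ0 hwpos)
  have hHub : ∀ x ∈ E, MvPolynomial.eval x H ≤ (1 + δ) * w x := by
    intro x hx
    have h1 := (abs_lt.mp (hHappr x hx)).2
    have h2 : δ * m ≤ δ * w x := mul_le_mul_of_nonneg_left (hmle x hx) hδ0.le
    nlinarith
  have hHlb : ∀ x ∈ E, (1 - δ) * w x ≤ MvPolynomial.eval x H := by
    intro x hx
    have h1 := (abs_lt.mp (hHappr x hx)).1
    have h2 : δ * m ≤ δ * w x := mul_le_mul_of_nonneg_left (hmle x hx) hδ0.le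
    nlinarith
  have hHpos : ∀ x ∈ E, 0 < MvPolynomial.eval x H :=
    fun x hx => lt_of_lt_of_le (by nlinarith [hwposE x hx]) (hHlb x hx)
  set h := H.totalDegree with hhdef
  -- choose ε'
  set a := η ^ ((h + 1 : ℝ)⁻¹) with hadef
  have ha1 : 1 < a := by
    rw [hadef]
    refine Real.one_lt_rpow_iff_of_pos (by linarith) |>.mpr (Or.inl ⟨hη1, by positivity⟩)
  have hapow : a ^ (h + 1) = η := by
    rw [hadef, ← Real.rpow_natCast (η ^ ((h + 1 : ℝ)⁻¹)) (h + 1), ← Real.rpow_mul (by linarith)]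
    rw [show ((h + 1 : ℕ) : ℝ) = (h : ℝ) + 1 by push_cast; ring]
    rw [inv_mul_cancel₀ (by positivity), Real.rpow_one]
  obtain ⟨C, hC0, hBMC⟩ := hBM (a - 1) (by linarith)
  refine ⟨C, hC0, fun d G hdeg => ?_⟩
  have h1a : 1 + (a - 1) = a := by ring
  set J := H ^ d * G with hJdef
  have hJdeg : J.totalDegree ≤ (h + 1) * d := by
    calc J.totalDegree ≤ (H ^ d).totalDegree + G.totalDegree :=
          MvPolynomial.totalDegree_mul _ _
      _ ≤ d * h + d := add_le_add (MvPolynomial.totalDegree_pow _ _) hdeg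
      _ = (h + 1) * d := by ring
  -- integrals
  set f₂ := fun x => (w x ^ d * |MvPolynomial.eval x G|) ^ 2 with hf₂def
  have hf₂cont : ContinuousOn f₂ E := by
    apply ContinuousOn.pow
    exact (hw.pow d).mul (MvPolynomial.continuous_eval (p := G)).continuousOn.abs
  have hf₂int : IntegrableOn f₂ E σ := hf₂cont.integrableOn_compact hE
  have hJcont : Continuous fun x => (MvPolynomial.eval x J) ^ 2 :=
    (MvPolynomial.continuous_eval (p := J)).pow 2
  have hJint : IntegrableOn (fun x => (MvPolynomial.eval x J) ^ 2) E σ :=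
    hJcont.continuousOn.integrableOn_compact hE
  have hf₂nonneg : 0 ≤ ∫ x, f₂ x ∂σ := integral_nonneg fun x => by positivity
  have hintle : ∫ x, (MvPolynomial.eval x J) ^ 2 ∂σ ≤ (1 + δ) ^ (2 * d) * ∫ x, f₂ x ∂σ := by
    rw [← integral_const_mul, ← hrestr]
    refine setIntegral_mono_on hJint (hf₂int.const_mul _) hEm ?_
    intro x hx
    have hev : MvPolynomial.eval x J = (MvPolynomial.eval x H) ^ d * MvPolynomial.eval x G := by
      rw [hJdef, map_mul, map_pow]
    have hH1 := hHub x hx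
    have hHp := (hHpos x hx).le
    have hwp := (hwposE x hx).le
    have key : (MvPolynomial.eval x H) ^ (2 * d) ≤ ((1 + δ) * w x) ^ (2 * d) :=
      pow_le_pow_left₀ hHp hH1 _
    calc (MvPolynomial.eval x J) ^ 2
        = (MvPolynomial.eval x H) ^ (2 * d) * (MvPolynomial.eval x G) ^ 2 := by
          rw [hev, mul_pow, ← pow_mul, mul_comm d 2]
      _ ≤ ((1 + δ) * w x) ^ (2 * d) * (MvPolynomial.eval x G) ^ 2 :=
          mul_le_mul_of_nonneg_right key (sq_nonneg _)
      _ = (1 + δ) ^ (2 * d) * f₂ x := by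
          simp only [hf₂def, mul_pow, sq_abs]; ring
  have hsqrtJ : Real.sqrt (∫ x, (MvPolynomial.eval x J) ^ 2 ∂σ)
      ≤ (1 + δ) ^ d * Real.sqrt (∫ x, f₂ x ∂σ) := by
    calc Real.sqrt (∫ x, (MvPolynomial.eval x J) ^ 2 ∂σ)
        ≤ Real.sqrt ((1 + δ) ^ (2 * d) * ∫ x, f₂ x ∂σ) := Real.sqrt_le_sqrt hintle
      _ = (1 + δ) ^ d * Real.sqrt (∫ x, f₂ x ∂σ) := by
          rw [Real.sqrt_mul (by positivity), mul_comm 2 d, pow_mul,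
            Real.sqrt_sq (by positivity)]
  -- the sup bound
  have hq0 : (0:ℝ) < 1 - δ := by linarith
  set B := sSup ((fun x => |MvPolynomial.eval x J|) '' E) with hBdef
  have hBbd : BddAbove ((fun x => |MvPolynomial.eval x J|) '' E) :=
    (hE.image (MvPolynomial.continuous_eval (p := J)).abs).bddAbove
  have hεpow : (1 + (a - 1)) ^ J.totalDegree ≤ η ^ d := by
    rw [h1a]
    calc a ^ J.totalDegree ≤ a ^ ((h + 1) * d) := pow_le_pow_right₀ ha1.le hJdeg
      _ = (a ^ (h + 1)) ^ d := by rw [pow_mul]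
      _ = η ^ d := by rw [hapow]
  set S₂ := Real.sqrt (∫ x, f₂ x ∂σ) with hS₂def
  have hS₂0 : 0 ≤ S₂ := Real.sqrt_nonneg _
  apply Real.sSup_le
  · rintro y ⟨x, hx, rfl⟩
    have hq : w x ≤ (1 - δ)⁻¹ * MvPolynomial.eval x H := by
      rw [le_inv_mul_iff₀ hq0]
      exact hHlb x hx
    have habsJ : |MvPolynomial.eval x J| = (MvPolynomial.eval x H) ^ d * |MvPolynomial.eval x G| := by
      rw [hJdef, map_mul, map_pow, abs_mul, abs_pow, abs_of_pos (hHpos x hx)]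
    have step1 : w x ^ d * |MvPolynomial.eval x G|
        ≤ ((1 - δ)⁻¹) ^ d * |MvPolynomial.eval x J| := by
      rw [habsJ, ← mul_assoc, ← mul_pow]
      exact mul_le_mul_of_nonneg_right (pow_le_pow_left₀ (hwposE x hx).le hq d) (abs_nonneg _)
    have step2 : |MvPolynomial.eval x J| ≤ B := le_csSup hBbd ⟨x, hx, rfl⟩
    have step3 : B ≤ C * η ^ d * ((1 + δ) ^ d * S₂) := by
      calc B ≤ C * (1 + (a - 1)) ^ J.totalDegree
            * Real.sqrt (∫ x, (MvPolynomial.eval x J) ^ 2 ∂σ) := hBMC J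
        _ ≤ C * η ^ d * ((1 + δ) ^ d * S₂) := by
            exact mul_le_mul (mul_le_mul le_rfl hεpow (pow_nonneg (by linarith) _) hC0.le) hsqrtJ
              (Real.sqrt_nonneg _) (mul_nonneg hC0.le (pow_nonneg (by linarith) d))
    calc w x ^ d * |MvPolynomial.eval x G|
        ≤ ((1 - δ)⁻¹) ^ d * |MvPolynomial.eval x J| := step1
      _ ≤ ((1 - δ)⁻¹) ^ d * (C * η ^ d * ((1 + δ) ^ d * S₂)) :=
          mul_le_mul_of_nonneg_left (step2.trans step3) (by positivity)
      _ = C * (((1 - δ)⁻¹ * (1 + δ)) * η) ^ d * S₂ := by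
          rw [mul_pow, mul_pow]; ring
      _ = C * (1 + ε) ^ d * S₂ := by
          rw [show (1 - δ)⁻¹ * (1 + δ) = η by
            rw [hkey, mul_comm η (1 - δ), ← mul_assoc, inv_mul_cancel₀ hq0.ne', one_mul],
            hη2]
  · positivity
end

section
/- Let H : ℝ^N → ℝ be continuous, homogeneous of degree γ > 0, and strictly positive off the origin. Then for every polynomial p of degree ≤ d in N variables and every A with 0 < A < (1/2)·min_{|y|=1} H(y), there exist R > 0 and the bound: if sup_{|y| ≤ R} e^{−dH(y)/2}|p(y)| ≤ M, then e^{−dH(y)/2}|p(y)| ≤ M' e^{−Ad|y|^γ} for |y| ≥ R and some constant M' depending only on M (for R sufficiently large depending on A, γ, N but not on d or p). -/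
open Finset Polynomial Filter


lemma prod_abs_sub_nodes (d i : ℕ) (hid : i ≤ d) :
    ∏ j ∈ (range (d+1)).erase i, |(i:ℝ) - (j:ℝ)|
      = (Nat.factorial i * Nat.factorial (d - i) : ℕ) := by
  have hsplit : (range (d+1)).erase i = range i ∪ Ico (i+1) (d+1) := by
    ext j; simp [Finset.mem_erase, Finset.mem_range, Finset.mem_Ico]; omega
  have hdisj : Disjoint (range i) (Ico (i+1) (d+1)) := by
    simp only [Finset.disjoint_left, Finset.mem_range, Finset.mem_Ico]; omega
  rw [hsplit, Finset.prod_union hdisj]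
  have h1 : ∏ j ∈ range i, |(i:ℝ) - (j:ℝ)| = (Nat.factorial i : ℝ) := by
    have : ∏ j ∈ range i, |(i:ℝ) - (j:ℝ)| = ∏ j ∈ range i, ((i - j : ℕ) : ℝ) := by
      refine Finset.prod_congr rfl fun j hj => ?_
      have hj' : j < i := Finset.mem_range.mp hj
      rw [Nat.cast_sub hj'.le, abs_of_nonneg]
      have : (j:ℝ) < i := by exact_mod_cast hj'
      linarith
    rw [this, ← Nat.cast_prod]
    norm_cast
    calc ∏ j ∈ range i, (i - j)
          = ∏ j ∈ range i, (i - 1 - j + 1) := Finset.prod_congr rfl fun j hj => by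
            have := Finset.mem_range.mp hj; omega
      _ = ∏ j ∈ range i, (j + 1) := Finset.prod_range_reflect (fun k => k + 1) i
      _ = Nat.factorial i := Finset.prod_range_add_one_eq_factorial i
  have h2 : ∏ j ∈ Ico (i+1) (d+1), |(i:ℝ) - (j:ℝ)| = (Nat.factorial (d - i) : ℝ) := by
    have : ∏ j ∈ Ico (i+1) (d+1), |(i:ℝ) - (j:ℝ)| = ∏ j ∈ Ico (i+1) (d+1), ((j - i : ℕ) : ℝ) := by
      refine Finset.prod_congr rfl fun j hj => ?_
      have hj' := Finset.mem_Ico.mp hj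
      rw [Nat.cast_sub (by omega), abs_of_nonpos]
      · ring
      · have : (i:ℝ) < j := by exact_mod_cast hj'.1
        linarith
    rw [this, ← Nat.cast_prod]
    norm_cast
    rw [Finset.prod_Ico_eq_prod_range]
    have hcard : d + 1 - (i + 1) = d - i := by omega
    calc ∏ j ∈ range (d + 1 - (i+1)), (i + 1 + j - i) = ∏ j ∈ range (d - i), (j + 1) := by
          rw [hcard]; exact Finset.prod_congr rfl fun j hj => by omega
      _ = Nat.factorial (d - i) := Finset.prod_range_add_one_eq_factorial _
  rw [h1, h2]; push_cast; ring


lemma choose_fact_bound (d i : ℕ) (hid : i ≤ d) :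
    ((Nat.factorial i * Nat.factorial (d - i) : ℕ) : ℝ)⁻¹
      ≤ (2:ℝ) ^ d / Nat.factorial d := by
  have hkey : Nat.factorial d ≤ 2 ^ d * (Nat.factorial i * Nat.factorial (d - i)) := by
    have h1 : d.choose i * (Nat.factorial i * Nat.factorial (d - i)) = Nat.factorial d := by
      rw [← mul_assoc]; exact Nat.choose_mul_factorial_mul_factorial hid
    have h2 : d.choose i ≤ 2 ^ d := by
      calc d.choose i ≤ ∑ m ∈ range (d+1), d.choose m :=
            Finset.single_le_sum (fun m _ => Nat.zero_le _) (by simp [Nat.lt_succ_of_le hid])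
        _ = 2 ^ d := Nat.sum_range_choose d
    calc Nat.factorial d = d.choose i * (Nat.factorial i * Nat.factorial (d - i)) := h1.symm
      _ ≤ 2 ^ d * (Nat.factorial i * Nat.factorial (d - i)) :=
          Nat.mul_le_mul_right _ h2
  have hpos : (0:ℝ) < ((Nat.factorial i * Nat.factorial (d - i) : ℕ) : ℝ) := by
    positivity
  have hdpos : (0:ℝ) < (Nat.factorial d : ℝ) := by positivity
  rw [inv_le_iff_one_le_mul₀ hpos, div_mul_eq_mul_div, le_div_iff₀ hdpos, one_mul]
  exact_mod_cast hkey

lemma poly_growth (d : ℕ) (hd : 1 ≤ d) (q : Polynomial ℝ) (hq : q.natDegree ≤ d)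
    (K : ℝ) (hK : ∀ t : ℝ, 0 ≤ t → t ≤ 1 → |q.eval t| ≤ K) :
    ∀ x : ℝ, 1 ≤ x → |q.eval x| ≤ K * (8 * Real.exp 1 * x) ^ d := by
  intro x hx
  have hd0 : (0:ℝ) < d := by exact_mod_cast hd
  set v : ℕ → ℝ := fun i => (i:ℝ) / d with hv
  have hvs : Set.InjOn v (range (d+1)) := by
    intro a _ b _ hab
    have : (a:ℝ) = b := by
      have h2 : (a:ℝ)/d = b/d := hab
      rwa [div_left_inj' hd0.ne'] at h2
    exact_mod_cast this
  have hdeg : q.degree < (#(range (d+1)) : ℕ) := by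
    rw [Finset.card_range]
    calc q.degree ≤ (q.natDegree : WithBot ℕ) := Polynomial.degree_le_natDegree
      _ < ((d+1 : ℕ) : WithBot ℕ) := by exact_mod_cast Nat.lt_succ_of_le hq
  have hinterp := Lagrange.eq_interpolate hvs hdeg
  have hevalx : q.eval x = ∑ i ∈ range (d+1), q.eval (v i) * (Lagrange.basis (range (d+1)) v i).eval x := by
    conv_lhs => rw [hinterp]
    simp [Lagrange.interpolate_apply, Polynomial.eval_finset_sum]
  have hK0 : 0 ≤ K := le_trans (abs_nonneg _) (hK 0 le_rfl zero_le_one)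
  -- bound each basis polynomial
  have hbasis : ∀ i ∈ range (d+1),
      |(Lagrange.basis (range (d+1)) v i).eval x|
        ≤ (2 * x * d) ^ d * ((Nat.factorial i * Nat.factorial (d - i) : ℕ) : ℝ)⁻¹ := by
    intro i hi
    have hid : i ≤ d := Nat.lt_succ_iff.mp (Finset.mem_range.mp hi)
    have hcard : #((range (d+1)).erase i) = d := by
      rw [Finset.card_erase_of_mem hi, Finset.card_range]; omega
    rw [Lagrange.basis, Polynomial.eval_prod, Finset.abs_prod]
    have hfac : ∀ j ∈ (range (d+1)).erase i,
        |(Lagrange.basisDivisor (v i) (v j)).eval x|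
          = (|x - v j|) * (|(i:ℝ) - j| / d)⁻¹ := by
      intro j hj
      have hji : j ≠ i := (Finset.mem_erase.mp hj).1
      rw [Lagrange.basisDivisor]
      simp only [Polynomial.eval_mul, Polynomial.eval_C, Polynomial.eval_sub, Polynomial.eval_X]
      rw [abs_mul, abs_inv, mul_comm]
      congr 2
      rw [hv]
      rw [show (i:ℝ)/d - (j:ℝ)/d = ((i:ℝ) - j)/d by ring, abs_div, abs_of_pos hd0]
    rw [Finset.prod_congr rfl hfac, Finset.prod_mul_distrib]
    have h1 : ∏ j ∈ (range (d+1)).erase i, |x - v j| ≤ (2*x) ^ d := by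
      have hle : ∏ j ∈ (range (d+1)).erase i, |x - v j|
          ≤ ∏ _j ∈ (range (d+1)).erase i, (2*x) := by
        refine Finset.prod_le_prod (fun j _ => abs_nonneg _) ?_
        intro j hj
        have hj' : j ∈ range (d+1) := Finset.mem_of_mem_erase hj
        have hj2 : (j:ℝ) ≤ d := by exact_mod_cast Nat.lt_succ_iff.mp (Finset.mem_range.mp hj')
        have hvj0 : 0 ≤ v j := by positivity
        have hvj1 : v j ≤ 1 := by rw [hv]; rw [div_le_one hd0]; exact hj2
        rw [abs_of_nonneg (by linarith)]
        linarith
      rwa [Finset.prod_const, hcard] at hle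
    have h2 : ∏ j ∈ (range (d+1)).erase i, (|(i:ℝ) - j| / d)⁻¹
        = (d:ℝ) ^ d * ((Nat.factorial i * Nat.factorial (d - i) : ℕ) : ℝ)⁻¹ := by
      rw [Finset.prod_inv_distrib, Finset.prod_div_distrib, Finset.prod_const, hcard,
        prod_abs_sub_nodes d i hid]
      rw [inv_div]
      ring
    rw [h2]
    have hfac0 : (0:ℝ) ≤ ((Nat.factorial i * Nat.factorial (d - i) : ℕ) : ℝ)⁻¹ := by positivity
    calc (∏ j ∈ (range (d+1)).erase i, |x - v j|)
          * ((d:ℝ) ^ d * ((Nat.factorial i * Nat.factorial (d - i) : ℕ) : ℝ)⁻¹)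
        ≤ (2*x)^d * ((d:ℝ) ^ d * ((Nat.factorial i * Nat.factorial (d - i) : ℕ) : ℝ)⁻¹) := by
          apply mul_le_mul_of_nonneg_right h1 (by positivity)
      _ = (2 * x * d) ^ d * ((Nat.factorial i * Nat.factorial (d - i) : ℕ) : ℝ)⁻¹ := by
          rw [mul_pow]; ring
  -- now sum up
  have hx0 : (0:ℝ) < x := lt_of_lt_of_le one_pos hx
  have h2x0 : (0:ℝ) ≤ 2 * x := by linarith
  set e := Real.exp 1 with he
  have he1 : (1:ℝ) ≤ e := Real.one_le_exp one_pos.le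
  have hA1' : ((d:ℝ)+1) ≤ 2^d := by
    have := Nat.lt_two_pow_self (n := d)
    exact_mod_cast Nat.succ_le_of_lt this
  have hA2' : (d:ℝ)^d / d.factorial ≤ e^d := by
    have h := Real.pow_div_factorial_le_exp (x := (d:ℝ)) (Nat.cast_nonneg d) d
    calc (d:ℝ)^d / d.factorial ≤ Real.exp d := h
      _ = e^d := by rw [he, ← Real.exp_nat_mul, mul_one]
  calc |q.eval x| = |∑ i ∈ range (d+1), q.eval (v i) * (Lagrange.basis (range (d+1)) v i).eval x| := by
        rw [hevalx]
    _ ≤ ∑ i ∈ range (d+1), |q.eval (v i) * (Lagrange.basis (range (d+1)) v i).eval x| :=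
        Finset.abs_sum_le_sum_abs _ _
    _ ≤ ∑ i ∈ range (d+1), K * ((2 * x * d) ^ d * ((2:ℝ)^d / d.factorial)) := by
        refine Finset.sum_le_sum fun i hi => ?_
        have hid : i ≤ d := Nat.lt_succ_iff.mp (Finset.mem_range.mp hi)
        rw [abs_mul]
        have hvq : |q.eval (v i)| ≤ K := by
          refine hK (v i) (by positivity) ?_
          rw [hv, div_le_one hd0]; exact_mod_cast hid
        have hb2 : |(Lagrange.basis (range (d+1)) v i).eval x|
            ≤ (2 * x * d) ^ d * ((2:ℝ)^d / d.factorial) := by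
          refine le_trans (hbasis i hi) ?_
          exact mul_le_mul_of_nonneg_left (choose_fact_bound d i hid) (by positivity)
        exact mul_le_mul hvq hb2 (abs_nonneg _) hK0
    _ = ((d:ℝ)+1) * (K * ((2 * x * d) ^ d * ((2:ℝ)^d / d.factorial))) := by
        rw [Finset.sum_const, Finset.card_range, nsmul_eq_mul]; push_cast; ring
    _ ≤ K * (8 * e * x) ^ d := by
        have key : ((d:ℝ)+1) * ((2*x*(d:ℝ))^d * ((2:ℝ)^d / d.factorial)) ≤ (8*e*x)^d := by
          have h2xd : (2*x*(d:ℝ))^d = (2*x)^d * (d:ℝ)^d := by rw [mul_pow]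
          have hrhs : (8*e*x)^d = ((2*x)^d * 2^d) * (2^d * e^d) := by
            rw [show (8:ℝ)*e*x = ((2*x)*2)*(2*e) by ring]; simp [mul_pow]
          rw [h2xd, hrhs]
          have h2xnn : (0:ℝ) ≤ (2*x)^d := pow_nonneg h2x0 d
          calc ((d:ℝ)+1) * ((2*x)^d * (d:ℝ)^d * (2^d / d.factorial))
              = ((2*x)^d * 2^d) * (((d:ℝ)+1) * ((d:ℝ)^d / d.factorial)) := by
                field_simp
            _ ≤ ((2*x)^d * 2^d) * (2^d * e^d) := by
                refine mul_le_mul_of_nonneg_left ?_ (by positivity)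
                exact mul_le_mul hA1' hA2' (by positivity) (by positivity)
        calc ((d:ℝ)+1) * (K * ((2 * x * d) ^ d * ((2:ℝ)^d / d.factorial)))
            = K * (((d:ℝ)+1) * ((2*x*(d:ℝ))^d * ((2:ℝ)^d / d.factorial))) := by ring
          _ ≤ K * (8 * e * x) ^ d := mul_le_mul_of_nonneg_left key hK0



lemma line_eval {n : ℕ} (u : Fin n → ℝ) (p : MvPolynomial (Fin n) ℝ) (t : ℝ) :
    (MvPolynomial.aeval (fun i => Polynomial.C (u i) * Polynomial.X) p).eval t
      = MvPolynomial.eval (fun i => t * u i) p := by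
  induction p using MvPolynomial.induction_on with
  | C a => simp
  | add p q hp hq => simp [hp, hq]
  | mul_X p i hp =>
      simp only [map_mul, MvPolynomial.aeval_X, Polynomial.eval_mul, Polynomial.eval_C,
        Polynomial.eval_X, MvPolynomial.eval_mul, MvPolynomial.eval_X, hp]
      ring

lemma line_degree {n : ℕ} (u : Fin n → ℝ) (p : MvPolynomial (Fin n) ℝ) :
    (MvPolynomial.aeval (fun i => Polynomial.C (u i) * Polynomial.X) p).natDegree
      ≤ p.totalDegree := by
  rw [MvPolynomial.aeval_def, MvPolynomial.eval₂_eq]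
  refine Polynomial.natDegree_sum_le_of_forall_le _ _ fun m hm => ?_
  refine le_trans (Polynomial.natDegree_mul_le) ?_
  have h1 : (algebraMap ℝ ℝ[X] (MvPolynomial.coeff m p)).natDegree = 0 := by
    simp [Polynomial.natDegree_C]
  rw [h1, zero_add]
  refine le_trans (Polynomial.natDegree_prod_le _ _) ?_
  calc ∑ i ∈ m.support, ((Polynomial.C (u i) * Polynomial.X) ^ m i).natDegree
      ≤ ∑ i ∈ m.support, m i := by
        refine Finset.sum_le_sum fun i _ => ?_
        refine le_trans (Polynomial.natDegree_pow_le) ?_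
        calc m i * (Polynomial.C (u i) * Polynomial.X).natDegree
            ≤ m i * 1 := by
              refine Nat.mul_le_mul_left _ ?_
              refine le_trans (Polynomial.natDegree_mul_le) ?_
              simp [Polynomial.natDegree_X]
          _ = m i := mul_one _
    _ ≤ p.totalDegree := MvPolynomial.le_totalDegree hm

/-- Decay estimate for weighted polynomials: if `H` is continuous, homogeneous of
degree `γ > 0` and positive off the origin, and `0 < A < (1/2)·min_{|y|=1} H(y)`,
then there is `R > 0` such that for any bound `M` on `e^{−dH/2}|p|` over the ball of
radius `R` there is a constant `M'` (independent of `d` and `p`) with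
`e^{−dH(y)/2}|p(y)| ≤ M' e^{−Ad|y|^γ}` for all `|y| ≥ R`. -/
theorem weighted_poly_decay {N : ℕ} (γ : ℝ) (hγ : 0 < γ)
    (H : EuclideanSpace ℝ (Fin N) → ℝ) (hHc : Continuous H)
    (hhom : ∀ c : ℝ, 0 ≤ c → ∀ x, H (c • x) = c ^ γ * H x)
    (hpos : ∀ x, x ≠ 0 → 0 < H x)
    (A : ℝ) (hA : 0 < A)
    (hA2 : A < (1 / 2) * sInf (H '' Metric.sphere (0 : EuclideanSpace ℝ (Fin N)) 1)) :
    ∃ R > (0:ℝ), ∀ M : ℝ, ∃ M' : ℝ, ∀ d : ℕ, 1 ≤ d →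
      ∀ p : MvPolynomial (Fin N) ℝ, p.totalDegree ≤ d →
      (∀ y : EuclideanSpace ℝ (Fin N), ‖y‖ ≤ R →
        Real.exp (-(d : ℝ) * H y / 2) * |MvPolynomial.eval (fun i => y i) p| ≤ M) →
      ∀ y : EuclideanSpace ℝ (Fin N), R ≤ ‖y‖ →
        Real.exp (-(d : ℝ) * H y / 2) * |MvPolynomial.eval (fun i => y i) p|
          ≤ M' * Real.exp (-A * (d : ℝ) * ‖y‖ ^ γ) := by
  classical
  set S := Metric.sphere (0 : EuclideanSpace ℝ (Fin N)) 1 with hS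
  rcases Set.eq_empty_or_nonempty S with hSe | hSne
  · exfalso
    rw [hSe, Set.image_empty, Real.sInf_empty] at hA2
    linarith
  have hcomp : IsCompact S := isCompact_sphere 0 1
  have himg : IsCompact (H '' S) := hcomp.image hHc
  have himgne : (H '' S).Nonempty := hSne.image H
  set c := sInf (H '' S) with hc
  obtain ⟨u₀, hu₀, hcu₀⟩ : c ∈ H '' S := himg.sInf_mem himgne
  have hu₀0 : u₀ ≠ 0 := by
    intro h
    rw [h] at hu₀
    simp [hS] at hu₀
  have hc0 : 0 < c := hcu₀ ▸ hpos u₀ hu₀0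
  have hcle : ∀ u ∈ S, c ≤ H u := fun u hu => csInf_le himg.bddBelow ⟨u, hu, rfl⟩
  set b := sSup (H '' S) with hb
  have hble : ∀ u ∈ S, H u ≤ b := fun u hu => le_csSup himg.bddAbove ⟨u, hu, rfl⟩
  have hb0 : 0 < b := lt_of_lt_of_le hc0 (hcu₀ ▸ hble u₀ hu₀)
  have hH0 : H 0 = 0 := by
    have h := hhom 0 le_rfl 0
    simpa [Real.zero_rpow hγ.ne'] using h
  have hHlow : ∀ y : EuclideanSpace ℝ (Fin N), y ≠ 0 → c * ‖y‖ ^ γ ≤ H y := by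
    intro y hy0
    have hny : ‖y‖ ≠ 0 := norm_ne_zero_iff.mpr hy0
    set u : EuclideanSpace ℝ (Fin N) := ‖y‖⁻¹ • y with hu
    have huS : u ∈ S := by
      simp only [hS, mem_sphere_iff_norm, sub_zero, hu, norm_smul, norm_inv, norm_norm]
      field_simp
    have h := hhom ‖y‖ (norm_nonneg y) u
    rw [hu, smul_inv_smul₀ hny] at h
    rw [h, mul_comm c]
    exact mul_le_mul_of_nonneg_left (hcle u huS)
      (Real.rpow_nonneg (norm_nonneg y) γ)
  have hHup : ∀ z : EuclideanSpace ℝ (Fin N), ‖z‖ ≤ 1 → H z ≤ b := by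
    intro z hz1
    rcases eq_or_ne z 0 with rfl | hz0
    · rw [hH0]; exact hb0.le
    have hnz : ‖z‖ ≠ 0 := norm_ne_zero_iff.mpr hz0
    set u : EuclideanSpace ℝ (Fin N) := ‖z‖⁻¹ • z with hu
    have huS : u ∈ S := by
      simp only [hS, mem_sphere_iff_norm, sub_zero, hu, norm_smul, norm_inv, norm_norm]
      field_simp
    have h := hhom ‖z‖ (norm_nonneg z) u
    rw [hu, smul_inv_smul₀ hnz] at h
    rw [h]
    calc ‖z‖ ^ γ * H u ≤ 1 * b :=
          mul_le_mul (Real.rpow_le_one (norm_nonneg z) hz1 hγ.le) (hble u huS)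
            (hpos u (by
              intro h0
              rw [h0] at huS
              simp [hS] at huS)).le zero_le_one
      _ = b := one_mul b
  have hε : 0 < c / 2 - A := by linarith
  set ε := c / 2 - A with hεdef
  set C := 8 * Real.exp 1 * Real.exp (b / 2) with hC
  have hC0 : 0 < C := by positivity
  -- choose R
  have hev : ∀ᶠ r : ℝ in atTop, C * r ≤ Real.exp (ε * r ^ γ) := by
    have h1 := (isLittleO_log_rpow_atTop hγ).bound (half_pos hε)
    have h2 := (tendsto_rpow_atTop hγ).eventually_ge_atTop (Real.log C / (ε / 2))
    filter_upwards [h1, h2, eventually_ge_atTop (1:ℝ)] with r hr1 hr2 hr3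
    have hrpos : (0:ℝ) < r := lt_of_lt_of_le one_pos hr3
    have hrγ : (0:ℝ) ≤ r ^ γ := Real.rpow_nonneg hrpos.le γ
    simp only [Real.norm_eq_abs, abs_of_nonneg hrγ] at hr1
    have e1 : Real.log r ≤ ε / 2 * r ^ γ := le_trans (le_abs_self _) hr1
    have e2 : Real.log C ≤ ε / 2 * r ^ γ := by
      rw [div_le_iff₀ (half_pos hε)] at hr2
      linarith [hr2]
    have hlog : Real.log (C * r) ≤ ε * r ^ γ := by
      rw [Real.log_mul hC0.ne' hrpos.ne']
      calc Real.log C + Real.log r ≤ ε / 2 * r ^ γ + ε / 2 * r ^ γ := add_le_add e2 e1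
        _ = ε * r ^ γ := by ring
    calc C * r = Real.exp (Real.log (C * r)) := (Real.exp_log (by positivity)).symm
      _ ≤ Real.exp (ε * r ^ γ) := Real.exp_le_exp.mpr hlog
  obtain ⟨R₀, hR₀⟩ := eventually_atTop.mp hev
  refine ⟨max R₀ 1, lt_of_lt_of_le one_pos (le_max_right _ _), ?_⟩
  intro M
  refine ⟨max M 0, ?_⟩
  intro d hd p hpd hyp y hyR
  have hM0 : 0 ≤ M := by
    have h := hyp 0 (by rw [norm_zero]; exact le_trans zero_le_one (le_max_right _ _))
    exact le_trans (mul_nonneg (Real.exp_pos _).le (abs_nonneg _)) h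
  have hMmax : max M 0 = M := max_eq_left hM0
  rw [hMmax]
  have hr1 : (1:ℝ) ≤ ‖y‖ := le_trans (le_max_right R₀ 1) hyR
  have hy0 : y ≠ 0 := by
    intro h
    rw [h, norm_zero] at hr1
    linarith
  set r := ‖y‖ with hr
  have hrne : r ≠ 0 := by positivity
  set u : EuclideanSpace ℝ (Fin N) := r⁻¹ • y with hu
  have hun : ‖u‖ = 1 := by
    rw [hu, norm_smul, norm_inv, norm_norm, ← hr]
    field_simp
  set q := MvPolynomial.aeval (fun i => Polynomial.C (u i) * Polynomial.X) p with hq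
  have hq_deg : q.natDegree ≤ d := le_trans (line_degree (fun i => u i) p) hpd
  set Kd := M * Real.exp (d * (b / 2)) with hKd
  have hK : ∀ t : ℝ, 0 ≤ t → t ≤ 1 → |q.eval t| ≤ Kd := by
    intro t ht0 ht1
    rw [hq, line_eval]
    have hcoord : (fun i => t * u i) = (fun i => (t • u : EuclideanSpace ℝ (Fin N)) i) := by
      funext i
      simp
    rw [hcoord]
    have hznorm : ‖(t • u : EuclideanSpace ℝ (Fin N))‖ ≤ max R₀ 1 := by
      rw [norm_smul, hun, mul_one, Real.norm_eq_abs, abs_of_nonneg ht0]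
      exact le_trans ht1 (le_max_right _ _)
    have h := hyp (t • u) hznorm
    have hHz : H (t • u) ≤ b := by
      apply hHup
      rw [norm_smul, hun, mul_one, Real.norm_eq_abs, abs_of_nonneg ht0]
      exact ht1
    have habs : |MvPolynomial.eval (fun i => (t • u : EuclideanSpace ℝ (Fin N)) i) p|
        ≤ M * Real.exp ((d:ℝ) * H (t • u) / 2) := by
      have ha : Real.exp (-(d:ℝ) * H (t • u) / 2)
          = (Real.exp ((d:ℝ) * H (t • u) / 2))⁻¹ := by
        rw [← Real.exp_neg]
        ring_nf
      rw [ha] at h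
      have hep : (0:ℝ) < Real.exp ((d:ℝ) * H (t • u) / 2) := Real.exp_pos _
      calc |MvPolynomial.eval (fun i => (t • u : EuclideanSpace ℝ (Fin N)) i) p|
          = Real.exp ((d:ℝ) * H (t • u) / 2)
            * ((Real.exp ((d:ℝ) * H (t • u) / 2))⁻¹
              * |MvPolynomial.eval (fun i => (t • u : EuclideanSpace ℝ (Fin N)) i) p|) := by
            field_simp
        _ ≤ Real.exp ((d:ℝ) * H (t • u) / 2) * M := mul_le_mul_of_nonneg_left h hep.le
        _ = M * Real.exp ((d:ℝ) * H (t • u) / 2) := mul_comm _ _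
    refine le_trans habs ?_
    rw [hKd]
    refine mul_le_mul_of_nonneg_left ?_ hM0
    apply Real.exp_le_exp.mpr
    have hd0 : (0:ℝ) ≤ (d:ℝ) := Nat.cast_nonneg d
    nlinarith
  -- apply the growth lemma
  have hgrow := poly_growth d hd q hq_deg Kd hK r hr1
  have hqr : q.eval r = MvPolynomial.eval (fun i => y i) p := by
    rw [hq, line_eval]
    have hfun : (fun i : Fin N => r * u i) = (fun i : Fin N => y i) := by
      funext i
      rw [hu]
      simp only [PiLp.smul_apply, smul_eq_mul]
      field_simp
    rw [hfun]
  rw [← hqr]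
  -- final estimate
  have hHy : c * r ^ γ ≤ H y := hHlow y hy0
  have hrR : C * r ≤ Real.exp (ε * r ^ γ) := hR₀ r (le_trans (le_max_left _ _) hyR)
  have hrγ0 : (0:ℝ) ≤ r ^ γ := Real.rpow_nonneg (norm_nonneg y) γ
  set X := C * r * Real.exp (-(c / 2) * r ^ γ) with hX
  have hX0 : 0 ≤ X := by positivity
  have hXle : X ≤ Real.exp (-A * r ^ γ) := by
    rw [hX]
    calc C * r * Real.exp (-(c / 2) * r ^ γ)
        ≤ Real.exp (ε * r ^ γ) * Real.exp (-(c / 2) * r ^ γ) :=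
          mul_le_mul_of_nonneg_right hrR (Real.exp_pos _).le
      _ = Real.exp (-A * r ^ γ) := by
          rw [← Real.exp_add]
          congr 1
          rw [hεdef]
          ring
  have hd0 : (0:ℝ) ≤ (d:ℝ) := Nat.cast_nonneg d
  calc Real.exp (-(d:ℝ) * H y / 2) * |q.eval r|
      ≤ Real.exp (-(d:ℝ) * (c * r ^ γ) / 2) * (Kd * (8 * Real.exp 1 * r) ^ d) := by
        refine mul_le_mul ?_ hgrow (abs_nonneg _) (Real.exp_pos _).le
        apply Real.exp_le_exp.mpr
        nlinarith
    _ = M * X ^ d := by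
        rw [hKd, hX, hC]
        rw [show -(d:ℝ) * (c * r ^ γ) / 2 = (d:ℝ) * (-(c / 2) * r ^ γ) by ring]
        rw [Real.exp_nat_mul, Real.exp_nat_mul]
        rw [show 8 * Real.exp 1 * Real.exp (b / 2) * r * Real.exp (-(c / 2) * r ^ γ)
            = Real.exp (b / 2) * (8 * Real.exp 1 * r) * Real.exp (-(c / 2) * r ^ γ) by ring]
        rw [mul_pow, mul_pow]
        ring
    _ ≤ M * Real.exp (-A * (d:ℝ) * r ^ γ) := by
        refine mul_le_mul_of_nonneg_left ?_ hM0
        calc X ^ d ≤ Real.exp (-A * r ^ γ) ^ d :=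
              pow_le_pow_left₀ hX0 hXle d
          _ = Real.exp (-A * (d:ℝ) * r ^ γ) := by
              rw [← Real.exp_nat_mul]
              congr 1
              ring
end
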